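/- arXiv:2306.10501 — 5 statements merged into one kernel-verified Lean document; each statement's English description precedes it below -/
import Mathlib

section
/- In an m₁×m₂ grid, a light beam starting at (x₁,x₂) passes through (y₁,y₂) if and only if there exist j, k ∈ {0,1} such that 2·gcd(m₁,m₂) divides (x₂ − x₁) + ((−1)^j·y₂ + (−1)^k·y₁). -/
private lemma tri_aux (m y : ℤ) (hm : 0 < m) (hy0 : 0 ≤ y) (hym : y ≤ m) (a : ℤ) :
    m - |m - a % (2 * m)| = y ↔ (2 * m) ∣ a - y ∨ (2 * m) ∣ a + y := by
  have h2m : (0:ℤ) < 2 * m := by linarith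
  have hr0 : 0 ≤ a % (2 * m) := Int.emod_nonneg a (by linarith)
  have hr2 : a % (2 * m) < 2 * m := Int.emod_lt_of_pos a h2m
  have hed : a % (2 * m) + 2 * m * (a / (2 * m)) = a := Int.emod_add_mul_ediv a (2 * m)
  constructor
  · intro h
    have habs : |m - a % (2 * m)| = m - y := by linarith
    rcases (abs_eq (by linarith : (0:ℤ) ≤ m - y)).mp habs with h' | h'
    · left
      exact ⟨a / (2 * m), by linarith⟩
    · right
      refine ⟨a / (2 * m) + 1, ?_⟩
      rw [mul_add, mul_one]; linarith
  · rintro (⟨c, hc⟩ | ⟨c, hc⟩)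
    · have hmod : a % (2 * m) = y := by
        have h0 : (a - y) % (2 * m) = 0 := by rw [hc]; exact Int.mul_emod_right _ _
        have h1 := Int.emod_eq_emod_iff_emod_sub_eq_zero.mpr h0
        rwa [Int.emod_eq_of_lt hy0 (by linarith)] at h1
      rw [hmod, abs_of_nonneg (by linarith)]; ring
    · rcases eq_or_lt_of_le hy0 with h0 | h0
      · have hmod : a % (2 * m) = y := by
          have h0' : (a - y) % (2 * m) = 0 := by
            have : a - y = 2 * m * c := by rw [← h0] at hc ⊢; linarith
            rw [this]; exact Int.mul_emod_right _ _
          have h1 := Int.emod_eq_emod_iff_emod_sub_eq_zero.mpr h0'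
          rwa [Int.emod_eq_of_lt hy0 (by linarith)] at h1
        rw [hmod, abs_of_nonneg (by linarith)]; ring
      · have hmod : a % (2 * m) = 2 * m - y := by
          have h0' : (a - (2 * m - y)) % (2 * m) = 0 := by
            have he : a - (2 * m - y) = 2 * m * (c - 1) := by
              rw [mul_sub, mul_one]; linarith
            rw [he]; exact Int.mul_emod_right _ _
          have h1 := Int.emod_eq_emod_iff_emod_sub_eq_zero.mpr h0'
          rwa [Int.emod_eq_of_lt (by linarith : (0:ℤ) ≤ 2 * m - y)
            (by linarith : 2 * m - y < 2 * m)] at h1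
        rw [hmod]
        rw [show m - (2 * m - y) = y - m from by ring, abs_of_nonpos (by linarith)]
        ring

private lemma crt_aux (n₁ n₂ A B : ℤ) :
    (∃ k : ℤ, n₁ ∣ k + A ∧ n₂ ∣ k + B) ↔ (Int.gcd n₁ n₂ : ℤ) ∣ A - B := by
  constructor
  · rintro ⟨k, h1, h2⟩
    have g1 : (Int.gcd n₁ n₂ : ℤ) ∣ k + A := dvd_trans (Int.gcd_dvd_left n₁ n₂) h1
    have g2 : (Int.gcd n₁ n₂ : ℤ) ∣ k + B := dvd_trans (Int.gcd_dvd_right n₁ n₂) h2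
    have := dvd_sub g1 g2
    rwa [show k + A - (k + B) = A - B from by ring] at this
  · rintro ⟨s, hs⟩
    have hb := Int.gcd_eq_gcd_ab n₁ n₂
    refine ⟨-A + n₁ * (Int.gcdA n₁ n₂) * s, ⟨(Int.gcdA n₁ n₂) * s, by ring⟩,
      ⟨-(Int.gcdB n₁ n₂) * s, ?_⟩⟩
    linear_combination -hs - s * hb

theorem light_passes_through_iff (m₁ m₂ : ℕ) (hm₁ : 0 < m₁) (hm₂ : 0 < m₂)
    (x₁ x₂ y₁ y₂ : ℤ)
    (hx₁ : 0 ≤ x₁ ∧ x₁ ≤ m₁) (hx₂ : 0 ≤ x₂ ∧ x₂ ≤ m₂)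
    (hy₁ : 0 ≤ y₁ ∧ y₁ ≤ m₁) (hy₂ : 0 ≤ y₂ ∧ y₂ ≤ m₂)
    (T₁ T₂ : ℤ → ℤ)
    (hT₁ : ∀ k : ℤ, T₁ k = m₁ - |(m₁ : ℤ) - ((x₁ + k) % (2 * m₁))|)
    (hT₂ : ∀ k : ℤ, T₂ k = m₂ - |(m₂ : ℤ) - ((x₂ + k) % (2 * m₂))|) :
    (∃ k : ℤ, T₁ k = y₁ ∧ T₂ k = y₂) ↔
      (∃ j k : ℕ, j ≤ 1 ∧ k ≤ 1 ∧
        (2 * (Nat.gcd m₁ m₂ : ℤ)) ∣ (x₂ - x₁) + ((-1) ^ j * y₂ + (-1) ^ k * y₁)) := by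
  have hm₁' : (0:ℤ) < m₁ := by exact_mod_cast hm₁
  have hm₂' : (0:ℤ) < m₂ := by exact_mod_cast hm₂
  have hgcd : (Int.gcd (2 * (m₁:ℤ)) (2 * (m₂:ℤ)) : ℤ) = 2 * (Nat.gcd m₁ m₂ : ℤ) := by
    rw [Int.gcd_mul_left]
    push_cast [Int.gcd_natCast_natCast]
    ring
  have hG1 : (2 * (Nat.gcd m₁ m₂ : ℤ)) ∣ (2 * (m₁:ℤ)) :=
    mul_dvd_mul_left 2 (Int.natCast_dvd_natCast.mpr (Nat.gcd_dvd_left m₁ m₂))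
  have hG2 : (2 * (Nat.gcd m₁ m₂ : ℤ)) ∣ (2 * (m₂:ℤ)) :=
    mul_dvd_mul_left 2 (Int.natCast_dvd_natCast.mpr (Nat.gcd_dvd_right m₁ m₂))
  simp only [hT₁, hT₂, tri_aux (m₁:ℤ) y₁ hm₁' hy₁.1 hy₁.2,
    tri_aux (m₂:ℤ) y₂ hm₂' hy₂.1 hy₂.2]
  constructor
  · rintro ⟨k, h1 | h1, h2 | h2⟩
    · refine ⟨1, 0, le_refl 1, by norm_num, ?_⟩
      have h := dvd_sub (hG2.trans h2) (hG1.trans h1)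
      rwa [show x₂ + k - y₂ - (x₁ + k - y₁) = x₂ - x₁ + ((-1:ℤ)^1 * y₂ + (-1:ℤ)^0 * y₁)
        from by ring] at h
    · refine ⟨0, 0, by norm_num, by norm_num, ?_⟩
      have h := dvd_sub (hG2.trans h2) (hG1.trans h1)
      rwa [show x₂ + k + y₂ - (x₁ + k - y₁) = x₂ - x₁ + ((-1:ℤ)^0 * y₂ + (-1:ℤ)^0 * y₁)
        from by ring] at h
    · refine ⟨1, 1, le_refl 1, le_refl 1, ?_⟩
      have h := dvd_sub (hG2.trans h2) (hG1.trans h1)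
      rwa [show x₂ + k - y₂ - (x₁ + k + y₁) = x₂ - x₁ + ((-1:ℤ)^1 * y₂ + (-1:ℤ)^1 * y₁)
        from by ring] at h
    · refine ⟨0, 1, by norm_num, le_refl 1, ?_⟩
      have h := dvd_sub (hG2.trans h2) (hG1.trans h1)
      rwa [show x₂ + k + y₂ - (x₁ + k + y₁) = x₂ - x₁ + ((-1:ℤ)^0 * y₂ + (-1:ℤ)^1 * y₁)
        from by ring] at h
  · rintro ⟨j, k, hj, hk, hd⟩
    interval_cases j <;> interval_cases k <;>
      simp only [pow_zero, pow_one, one_mul, neg_one_mul] at hd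
    · -- j = 0, k = 0 : ∣ x₂ - x₁ + (y₂ + y₁);  A = x₁ - y₁, B = x₂ + y₂
      obtain ⟨n, hn1, hn2⟩ := (crt_aux (2 * (m₁:ℤ)) (2 * (m₂:ℤ)) (x₁ - y₁) (x₂ + y₂)).mpr
        (by rw [hgcd]
            have h := dvd_neg.mpr hd
            rwa [show -(x₂ - x₁ + (y₂ + y₁)) = x₁ - y₁ - (x₂ + y₂) from by ring] at h)
      refine ⟨n, Or.inl ?_, Or.inr ?_⟩
      · rwa [show x₁ + n - y₁ = n + (x₁ - y₁) from by ring]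
      · rwa [show x₂ + n + y₂ = n + (x₂ + y₂) from by ring]
    · -- j = 0, k = 1 : ∣ x₂ - x₁ + (y₂ - y₁);  A = x₁ + y₁, B = x₂ + y₂
      obtain ⟨n, hn1, hn2⟩ := (crt_aux (2 * (m₁:ℤ)) (2 * (m₂:ℤ)) (x₁ + y₁) (x₂ + y₂)).mpr
        (by rw [hgcd]
            have h := dvd_neg.mpr hd
            rwa [show -(x₂ - x₁ + (y₂ + -y₁)) = x₁ + y₁ - (x₂ + y₂) from by ring] at h)
      refine ⟨n, Or.inr ?_, Or.inr ?_⟩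
      · rwa [show x₁ + n + y₁ = n + (x₁ + y₁) from by ring]
      · rwa [show x₂ + n + y₂ = n + (x₂ + y₂) from by ring]
    · -- j = 1, k = 0 : ∣ x₂ - x₁ + (-y₂ + y₁);  A = x₁ - y₁, B = x₂ - y₂
      obtain ⟨n, hn1, hn2⟩ := (crt_aux (2 * (m₁:ℤ)) (2 * (m₂:ℤ)) (x₁ - y₁) (x₂ - y₂)).mpr
        (by rw [hgcd]
            have h := dvd_neg.mpr hd
            rwa [show -(x₂ - x₁ + (-y₂ + y₁)) = x₁ - y₁ - (x₂ - y₂) from by ring] at h)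
      refine ⟨n, Or.inl ?_, Or.inl ?_⟩
      · rwa [show x₁ + n - y₁ = n + (x₁ - y₁) from by ring]
      · rwa [show x₂ + n - y₂ = n + (x₂ - y₂) from by ring]
    · -- j = 1, k = 1 : ∣ x₂ - x₁ + (-y₂ - y₁);  A = x₁ + y₁, B = x₂ - y₂
      obtain ⟨n, hn1, hn2⟩ := (crt_aux (2 * (m₁:ℤ)) (2 * (m₂:ℤ)) (x₁ + y₁) (x₂ - y₂)).mpr
        (by rw [hgcd]
            have h := dvd_neg.mpr hd
            rwa [show -(x₂ - x₁ + (-y₂ + -y₁)) = x₁ + y₁ - (x₂ - y₂) from by ring] at h)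
      refine ⟨n, Or.inr ?_, Or.inl ?_⟩
      · rwa [show x₁ + n + y₁ = n + (x₁ + y₁) from by ring]
      · rwa [show x₂ + n - y₂ = n + (x₂ - y₂) from by ring]
end

section
/- Any closed billiard path in an m₁×m₂ grid hits the boundary exactly 2(m₁+m₂)/gcd(m₁,m₂) times per period. Equivalently, writing K = 2·lcm(m₁,m₂), the number of k ∈ {0,...,K−1} for which the triangle wave T₁(k) ∈ {0, m₁} or T₂(k) ∈ {0, m₂} equals 2(m₁+m₂)/gcd(m₁,m₂), provided the starting point lies on a closed path (i.e., the path does not pass through a corner). -/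
private lemma tri_key (m : ℕ) (x : ℤ) (hm : 0 < m) (T : ℤ → ℤ)
    (hT : ∀ k : ℤ, T k = m - |(m : ℤ) - ((x + k) % (2 * m))|) (k : ℤ) :
    (T k = 0 ∨ T k = m) ↔ (m : ℤ) ∣ (x + k) := by
  rw [hT]
  have hmpos : (0:ℤ) < m := by exact_mod_cast hm
  have hm' : (0:ℤ) < 2 * m := by positivity
  set r := (x + k) % (2 * m) with hr
  have h0 : 0 ≤ r := Int.emod_nonneg _ (by positivity)
  have h1 : r < 2 * m := Int.emod_lt_of_pos _ hm'
  have heq : x + k = 2 * m * ((x + k) / (2 * m)) + r :=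
    (Int.mul_ediv_add_emod (x + k) (2 * m)).symm
  have hd : (m : ℤ) ∣ (x + k) ↔ (m : ℤ) ∣ r := by
    constructor
    · intro h
      have hre : r = (x + k) - 2 * m * ((x + k) / (2 * m)) := by linarith [heq]
      rw [hre]
      exact dvd_sub h ⟨2 * ((x + k) / (2 * m)), by ring⟩
    · intro h
      rw [heq]
      exact dvd_add ⟨2 * ((x + k) / (2 * m)), by ring⟩ h
  rw [hd]
  constructor
  · rintro (h | h)
    · rcases abs_cases ((m:ℤ) - r) with ⟨ha, hb⟩ | ⟨ha, hb⟩ <;> rw [ha] at h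
      · have : r = 0 := by omega
        simp [this]
      · exfalso; omega
    · rcases abs_cases ((m:ℤ) - r) with ⟨ha, hb⟩ | ⟨ha, hb⟩ <;> rw [ha] at h
      · have : r = m := by omega
        exact this ▸ dvd_refl _
      · have : r = m := by omega
        exact this ▸ dvd_refl _
  · rintro ⟨t, ht⟩
    have ht0 : 0 ≤ t := by nlinarith
    have ht2 : t < 2 := by nlinarith
    interval_cases t
    · left
      have : r = 0 := by omega
      rw [this]
      simp [abs_of_nonneg hmpos.le]
    · right
      have : r = m := by omega
      rw [this]
      simp

private lemma count_aux (m c r : ℕ) (hm : 0 < m) (hr : r < m) :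
    ((Finset.range (c * m)).filter (fun k => k % m = r)).card = c := by
  have h : ((Finset.range (c * m)).filter (fun k => k % m = r)).card
      = (Finset.range c).card := by
    apply Finset.card_bij' (fun k _ => k / m) (fun i _ => i * m + r)
    · intro k hk
      simp only [Finset.mem_filter, Finset.mem_range] at hk
      simp only [Finset.mem_range]
      exact Nat.div_lt_of_lt_mul (by rw [mul_comm]; exact hk.1)
    · intro i hi
      simp only [Finset.mem_range] at hi
      simp only [Finset.mem_filter, Finset.mem_range]
      constructor
      · calc i * m + r < i * m + m := by omega
          _ = (i + 1) * m := by ring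
          _ ≤ c * m := Nat.mul_le_mul_right m hi
      · rw [mul_comm i m, Nat.mul_add_mod, Nat.mod_eq_of_lt hr]
    · intro k hk
      simp only [Finset.mem_filter, Finset.mem_range] at hk
      rw [← hk.2, mul_comm]
      exact Nat.div_add_mod k m
    · intro i hi
      rw [mul_comm, Nat.mul_add_div hm, Nat.div_eq_of_lt hr, Nat.add_zero]

  simpa using h
theorem boundary_hits_count (m₁ m₂ : ℕ) (hm₁ : 0 < m₁) (hm₂ : 0 < m₂)
    (x₁ x₂ : ℤ) (hx₁ : 0 ≤ x₁ ∧ x₁ ≤ m₁) (hx₂ : 0 ≤ x₂ ∧ x₂ ≤ m₂)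
    (T₁ T₂ : ℤ → ℤ)
    (hT₁ : ∀ k : ℤ, T₁ k = m₁ - |(m₁ : ℤ) - ((x₁ + k) % (2 * m₁))|)
    (hT₂ : ∀ k : ℤ, T₂ k = m₂ - |(m₂ : ℤ) - ((x₂ + k) % (2 * m₂))|)
    (hNoCorner : ∀ k : ℤ, ¬((T₁ k = 0 ∨ T₁ k = m₁) ∧ (T₂ k = 0 ∨ T₂ k = m₂))) :
    ((Finset.range (2 * Nat.lcm m₁ m₂)).filter
        (fun k : ℕ => T₁ k = 0 ∨ T₁ k = m₁ ∨ T₂ k = 0 ∨ T₂ k = m₂)).card =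
      2 * (m₁ + m₂) / Nat.gcd m₁ m₂ := by
  have key₁ := tri_key m₁ x₁ hm₁ T₁ hT₁
  have key₂ := tri_key m₂ x₂ hm₂ T₂ hT₂
  set g := Nat.gcd m₁ m₂ with hg
  have hgpos : 0 < g := Nat.gcd_pos_of_pos_left _ hm₁
  have hm₁' : (0:ℤ) < m₁ := by exact_mod_cast hm₁
  have hm₂' : (0:ℤ) < m₂ := by exact_mod_cast hm₂
  set r₁ : ℕ := ((-x₁) % (m₁ : ℤ)).toNat with hr₁def
  set r₂ : ℕ := ((-x₂) % (m₂ : ℤ)).toNat with hr₂def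
  have hr₁cast : (r₁ : ℤ) = (-x₁) % (m₁ : ℤ) :=
    Int.toNat_of_nonneg (Int.emod_nonneg _ hm₁'.ne')
  have hr₂cast : (r₂ : ℤ) = (-x₂) % (m₂ : ℤ) :=
    Int.toNat_of_nonneg (Int.emod_nonneg _ hm₂'.ne')
  have hr₁lt : r₁ < m₁ := by
    have := Int.emod_lt_of_pos (-x₁) hm₁'
    omega
  have hr₂lt : r₂ < m₂ := by
    have := Int.emod_lt_of_pos (-x₂) hm₂'
    omega
  have hc : ∀ (m : ℕ) (x : ℤ) (r : ℕ), (0:ℤ) < m → (r : ℤ) = (-x) % (m:ℤ) →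
      ∀ k : ℕ, ((m:ℤ) ∣ (x + k) ↔ k % m = r) := by
    intro m x r hm0 hrc k
    have hmod : (m:ℤ) ∣ (x + k) ↔ (-x) % (m:ℤ) = (k:ℤ) % (m:ℤ) := by
      rw [show ((-x) % (m:ℤ) = (k:ℤ) % (m:ℤ)) ↔ Int.ModEq m (-x) k from Iff.rfl,
        Int.modEq_iff_dvd, sub_neg_eq_add, add_comm]
    rw [hmod, ← hrc, ← Int.natCast_mod]
    exact ⟨fun h => by exact_mod_cast h.symm, fun h => by exact_mod_cast h.symm⟩
  have hc₁ : ∀ k : ℕ, ((m₁:ℤ) ∣ (x₁ + k) ↔ k % m₁ = r₁) := hc m₁ x₁ r₁ hm₁' hr₁cast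
  have hc₂ : ∀ k : ℕ, ((m₂:ℤ) ∣ (x₂ + k) ↔ k % m₂ = r₂) := hc m₂ x₂ r₂ hm₂' hr₂cast
  have hfeq : (Finset.range (2 * Nat.lcm m₁ m₂)).filter
        (fun k : ℕ => T₁ k = 0 ∨ T₁ k = m₁ ∨ T₂ k = 0 ∨ T₂ k = m₂)
      = (Finset.range (2 * Nat.lcm m₁ m₂)).filter
        (fun k : ℕ => k % m₁ = r₁ ∨ k % m₂ = r₂) := by
    apply Finset.filter_congr
    intro k _
    have e1 := (key₁ k).trans (hc₁ k)
    have e2 := (key₂ k).trans (hc₂ k)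
    constructor
    · rintro (h | h | h | h)
      · exact Or.inl (e1.mp (Or.inl h))
      · exact Or.inl (e1.mp (Or.inr h))
      · exact Or.inr (e2.mp (Or.inl h))
      · exact Or.inr (e2.mp (Or.inr h))
    · rintro (h | h)
      · rcases e1.mpr h with h' | h'
        exacts [Or.inl h', Or.inr (Or.inl h')]
      · rcases e2.mpr h with h' | h'
        exacts [Or.inr (Or.inr (Or.inl h')), Or.inr (Or.inr (Or.inr h'))]
  rw [hfeq, Finset.filter_or, Finset.card_union_of_disjoint]
  · obtain ⟨a, ha⟩ := Nat.gcd_dvd_left m₁ m₂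
    obtain ⟨b, hb⟩ := Nat.gcd_dvd_right m₁ m₂
    have hlcm1 : Nat.lcm m₁ m₂ = m₁ * b := by
      rw [Nat.lcm, ← hg, hb, show m₁ * (g * b) = g * (m₁ * b) from by ring,
        Nat.mul_div_cancel_left _ hgpos]
    have hlcm2 : Nat.lcm m₁ m₂ = m₂ * a := by
      rw [Nat.lcm, ← hg, ha, show (g * a) * m₂ = g * (m₂ * a) from by ring,
        Nat.mul_div_cancel_left _ hgpos]
    have c1 : ((Finset.range (2 * Nat.lcm m₁ m₂)).filter (fun k => k % m₁ = r₁)).card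
        = 2 * b := by
      rw [show 2 * Nat.lcm m₁ m₂ = (2 * b) * m₁ from by rw [hlcm1]; ring]
      exact count_aux m₁ (2 * b) r₁ hm₁ hr₁lt
    have c2 : ((Finset.range (2 * Nat.lcm m₁ m₂)).filter (fun k => k % m₂ = r₂)).card
        = 2 * a := by
      rw [show 2 * Nat.lcm m₁ m₂ = (2 * a) * m₂ from by rw [hlcm2]; ring]
      exact count_aux m₂ (2 * a) r₂ hm₂ hr₂lt
    have hsum : 2 * (m₁ + m₂) = g * (2 * b + 2 * a) := by
      rw [hg, show m₁.gcd m₂ * (2 * b + 2 * a)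
          = 2 * (m₁.gcd m₂ * a) + 2 * (m₁.gcd m₂ * b) from by ring, ← ha, ← hb]
      ring
    rw [c1, c2, hsum, Nat.mul_div_cancel_left _ hgpos]
  · rw [Finset.disjoint_left]
    intro k hk1 hk2
    simp only [Finset.mem_filter] at hk1 hk2
    exact hNoCorner k ⟨(key₁ k).mpr ((hc₁ k).mpr hk1.2), (key₂ k).mpr ((hc₂ k).mpr hk2.2)⟩
end

section
/- In an m₁×m₂ grid, two lattice points P₁ = (x₁,x₂) and P₂ = (y₁,y₂) can be joined by a sequence of unit-diagonal moves (each move changes both coordinates by ±1, reflecting via the triangle wave at the boundary) if and only if x₁ + x₂ ≡ y₁ + y₂ (mod 2). -/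
/-- One diagonal step in the `m₁ × m₂` grid: each coordinate changes by `±1`
(with reflection at the boundary enforced by staying in range). -/
def DiagStep (m₁ m₂ : ℕ) (P Q : ℕ × ℕ) : Prop :=
  (Q.1 = P.1 + 1 ∨ Q.1 + 1 = P.1) ∧ (Q.2 = P.2 + 1 ∨ Q.2 + 1 = P.2) ∧
    Q.1 ≤ m₁ ∧ Q.2 ≤ m₂

private lemma diag_rtg_parity {m₁ m₂ : ℕ} {P Q : ℕ × ℕ}
    (h : Relation.ReflTransGen (DiagStep m₁ m₂) P Q) :
    (P.1 + P.2) % 2 = (Q.1 + Q.2) % 2 := by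
  induction h with
  | refl => rfl
  | tail _ hbc ih =>
    obtain ⟨h1, h2, -, -⟩ := hbc
    omega

private lemma diag_rtg_symm {m₁ m₂ : ℕ} {P Q : ℕ × ℕ}
    (hP1 : P.1 ≤ m₁) (hP2 : P.2 ≤ m₂)
    (h : Relation.ReflTransGen (DiagStep m₁ m₂) P Q) :
    Relation.ReflTransGen (DiagStep m₁ m₂) Q P := by
  have key : Q.1 ≤ m₁ ∧ Q.2 ≤ m₂ ∧ Relation.ReflTransGen (DiagStep m₁ m₂) Q P := by
    induction h with
    | refl => exact ⟨hP1, hP2, .refl⟩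
    | tail hPb hbc ih =>
      obtain ⟨hb1, hb2, hbP⟩ := ih
      obtain ⟨h1, h2, hc1, hc2⟩ := hbc
      exact ⟨hc1, hc2, Relation.ReflTransGen.head ⟨by omega, by omega, hb1, hb2⟩ hbP⟩
  exact key.2.2

private lemma diag_reach_axis {m₁ m₂ : ℕ} (hm₁ : 0 < m₁) (hm₂ : 0 < m₂) :
    ∀ a, a ≤ m₁ → Relation.ReflTransGen (DiagStep m₁ m₂) ((a % 2, 0) : ℕ × ℕ) (a, 0) := by
  intro a
  induction a using Nat.strong_induction_on with
  | _ a ih =>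
    intro ha
    by_cases h : a ≤ 1
    · have : a % 2 = a := by omega
      rw [this]
    · have h2 : 2 ≤ a := by omega
      have prev := ih (a - 2) (by omega) (by omega)
      have hmod : (a - 2) % 2 = a % 2 := by omega
      rw [hmod] at prev
      have s1 : DiagStep m₁ m₂ (a - 2, 0) (a - 1, 1) := ⟨by omega, by omega, by omega, hm₂⟩
      have s2 : DiagStep m₁ m₂ (a - 1, 1) (a, 0) := ⟨by omega, by omega, ha, by omega⟩
      exact (prev.tail s1).tail s2

private lemma diag_reach {m₁ m₂ : ℕ} (hm₁ : 0 < m₁) (hm₂ : 0 < m₂) :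
    ∀ b a, a ≤ m₁ → b ≤ m₂ →
      Relation.ReflTransGen (DiagStep m₁ m₂) (((a + b) % 2, 0) : ℕ × ℕ) (a, b) := by
  intro b
  induction b with
  | zero =>
    intro a ha _
    simpa using diag_reach_axis hm₁ hm₂ a ha
  | succ b ihb =>
    intro a ha hb
    by_cases h : a = 0
    · subst h
      have prev := ihb 1 hm₁ (by omega)
      have hmod : (1 + b) % 2 = (0 + (b + 1)) % 2 := by omega
      rw [hmod] at prev
      exact prev.tail ⟨by omega, by omega, by omega, hb⟩
    · have prev := ihb (a - 1) (by omega) (by omega)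
      have hmod : (a - 1 + b) % 2 = (a + (b + 1)) % 2 := by omega
      rw [hmod] at prev
      exact prev.tail ⟨by omega, by omega, ha, hb⟩

theorem same_orbit_iff_parity (m₁ m₂ : ℕ) (hm₁ : 0 < m₁) (hm₂ : 0 < m₂)
    (x₁ x₂ y₁ y₂ : ℕ) (hx₁ : x₁ ≤ m₁) (hx₂ : x₂ ≤ m₂) (hy₁ : y₁ ≤ m₁) (hy₂ : y₂ ≤ m₂) :
    Relation.ReflTransGen (DiagStep m₁ m₂) (x₁, x₂) (y₁, y₂) ↔
      (x₁ + x₂) % 2 = (y₁ + y₂) % 2 := by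
  constructor
  · intro h
    exact diag_rtg_parity h
  · intro h
    have p1 := diag_reach hm₁ hm₂ x₂ x₁ hx₁ hx₂
    have p2 := diag_reach hm₁ hm₂ y₂ y₁ hy₁ hy₂
    rw [← h] at p2
    have hb1 : ((x₁ + x₂) % 2 : ℕ) ≤ m₁ := by omega
    have p1' := diag_rtg_symm (P := (((x₁ + x₂) % 2 : ℕ), 0)) hb1 (by omega) p1
    exact p1'.trans p2
end

section
/- In the p-dimensional grid with diagonal moves (each move changes all p coordinates by ±1, with reflection at the boundaries so 0 ↦ 1 and mᵢ ↦ mᵢ−1), two points P = (x₁,...,x_p) and Q = (y₁,...,y_p) are in the same orbit if and only if their indices agree: [x₁+x_j]₂ = [y₁+y_j]₂ for all j = 2,...,p, where [a]₂ denotes a mod 2. Consequently the grid splits into exactly 2^{p−1} orbits. -/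
/-- One diagonal step in the `p`-dimensional grid: each coordinate changes by `±1`
(with reflection at the boundary enforced by staying in range). -/
def SpatialDiagStep {p : ℕ} (m : Fin p → ℕ) (P Q : Fin p → ℕ) : Prop :=
  ∀ i, (Q i = P i + 1 ∨ Q i + 1 = P i) ∧ Q i ≤ m i

lemma step_index {p : ℕ} {m P Q : Fin p → ℕ}
    (h : SpatialDiagStep m P Q) (i j : Fin p) :
    (P i + P j) % 2 = (Q i + Q j) % 2 := by
  have hi := (h i).1
  have hj := (h j).1
  omega

lemma rtg_index {p : ℕ} {m P Q : Fin p → ℕ}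
    (h : Relation.ReflTransGen (SpatialDiagStep m) P Q) (i j : Fin p) :
    (P i + P j) % 2 = (Q i + Q j) % 2 := by
  induction h with
  | refl => rfl
  | tail _ hstep ih => exact ih.trans (step_index hstep i j)

lemma rtg_rev {p : ℕ} {m P Q : Fin p → ℕ} (hP : ∀ i, P i ≤ m i)
    (h : Relation.ReflTransGen (SpatialDiagStep m) P Q) :
    (∀ i, Q i ≤ m i) ∧ Relation.ReflTransGen (SpatialDiagStep m) Q P := by
  induction h with
  | refl => exact ⟨hP, .refl⟩
  | tail _ hbc ih =>
    refine ⟨fun i => (hbc i).2, Relation.ReflTransGen.head ?_ ih.2⟩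
    intro i
    have h1 := (hbc i).1
    have h2 := ih.1 i
    exact ⟨by omega, h2⟩

lemma descend {p : ℕ} (m : Fin p → ℕ) (hm : ∀ i, 0 < m i) :
    ∀ N (X : Fin p → ℕ), (∀ i, X i ≤ m i) → (∑ i, (X i - 1)) ≤ N →
    ∃ Y, Relation.ReflTransGen (SpatialDiagStep m) X Y ∧ ∀ i, Y i ≤ 1 := by
  intro N
  induction N with
  | zero =>
    intro X hX hsum
    refine ⟨X, .refl, fun i => ?_⟩
    have h0 : X i - 1 = 0 :=
      Finset.sum_eq_zero_iff.mp (Nat.le_zero.mp hsum) i (Finset.mem_univ i)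
    omega
  | succ N ih =>
    intro X hX hsum
    by_cases h : ∀ i, X i ≤ 1
    · exact ⟨X, .refl, h⟩
    · push_neg at h
      obtain ⟨i0, hi0⟩ := h
      set g : Fin p → ℕ := fun i => if 2 ≤ X i then X i - 1 else 1 - X i with hg
      have hstep : SpatialDiagStep m X g := by
        intro i
        have := hX i
        have := hm i
        by_cases h2 : 2 ≤ X i <;> simp only [hg, h2, if_true, if_false] <;>
          constructor <;> omega
      have hgle : ∀ i, g i ≤ m i := fun i => (hstep i).2
      have hlt : (∑ i, (g i - 1)) < ∑ i, (X i - 1) := by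
        refine Finset.sum_lt_sum (fun i _ => ?_) ⟨i0, Finset.mem_univ i0, ?_⟩
        · by_cases h2 : 2 ≤ X i <;> simp only [hg, h2, if_true, if_false] <;> omega
        · have h2 : 2 ≤ X i0 := by omega
          simp only [hg, h2, if_true]
          omega
      obtain ⟨Y, hY, hY1⟩ := ih g hgle (by omega)
      exact ⟨Y, .head hstep hY, hY1⟩

lemma to_canonical {p : ℕ} (hp : 0 < p) (m : Fin p → ℕ) (hm : ∀ i, 0 < m i)
    (X : Fin p → ℕ) (hX : ∀ i, X i ≤ m i) :
    ∃ Y, Relation.ReflTransGen (SpatialDiagStep m) X Y ∧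
      ∀ i, Y i = (X ⟨0, hp⟩ + X i) % 2 := by
  obtain ⟨Y, hY, hY1⟩ := descend m hm (∑ i, (X i - 1)) X hX le_rfl
  have hidx : ∀ i, (X ⟨0, hp⟩ + X i) % 2 = (Y ⟨0, hp⟩ + Y i) % 2 :=
    fun i => rtg_index hY _ i
  by_cases h0 : Y ⟨0, hp⟩ = 0
  · refine ⟨Y, hY, fun i => ?_⟩
    have := hY1 i
    have := hidx i
    omega
  · set Z : Fin p → ℕ := fun i => 1 - Y i with hZ
    have hstep : SpatialDiagStep m Y Z := by
      intro i
      have := hY1 i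
      have := hm i
      simp only [hZ]
      constructor <;> omega
    refine ⟨Z, hY.tail hstep, fun i => ?_⟩
    have h1 := hY1 i
    have h2 := hY1 ⟨0, hp⟩
    have := hidx i
    simp only [hZ]
    omega

theorem same_orbit_iff_index_eq (p : ℕ) (hp : 2 ≤ p) (m : Fin p → ℕ)
    (hm : ∀ i, 0 < m i) (P Q : Fin p → ℕ)
    (hP : ∀ i, P i ≤ m i) (hQ : ∀ i, Q i ≤ m i) :
    Relation.ReflTransGen (SpatialDiagStep m) P Q ↔
      ∀ j : Fin p, (P ⟨0, by omega⟩ + P j) % 2 = (Q ⟨0, by omega⟩ + Q j) % 2 := by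
  have hp0 : 0 < p := by omega
  constructor
  · intro h j
    exact rtg_index h _ j
  · intro h
    obtain ⟨Y, hPY, hYc⟩ := to_canonical hp0 m hm P hP
    obtain ⟨Z, hQZ, hZc⟩ := to_canonical hp0 m hm Q hQ
    have hYZ : Y = Z := by
      funext i
      rw [hYc i, hZc i]
      exact h i
    exact hPY.trans (hYZ ▸ (rtg_rev hQ hQZ).2)
end

section
/- For the positive circular sequence with first term t and height m, the period polynomial satisfies the factorization (1−x)²·f⁺(x,t,m) = (t−1)x^{2m+1} − t·x^{2m} + 2x^{2m−t+1} − 2x^{m−t+1} + (1−t)x + t; equivalently f⁺(x,t,m) = ((1−x^m)/(1−x))·( x(1−x^{m−t})/(1−x) − x^{m−t+1}(1−x^{t−1})/(1−x) + (t−1)x^m + t ). -/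
open Polynomial

/-- The `n`-th term of the positive circular sequence with first term `t`
and height `m`, for `0 ≤ n ≤ 2m - 1`. -/
noncomputable def circTerm (m t n : ℕ) : ℚ :=
  if n ≤ m - t then (n : ℚ) + t
  else if n ≤ 2 * m - t then (2 * m : ℚ) - t - n
  else (n : ℚ) - (2 * m - t : ℕ)

lemma aff (α β : ℚ) (N : ℕ) :
    (1 - (X : ℚ[X]))^2 * ∑ n ∈ Finset.range N, C (α + β * n) * X ^ n =
      C α + C (β - α) * X - C (α + β * N) * X ^ N + C (α + β * N - β) * X ^ (N+1) := by
  induction N with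
  | zero => simp [map_add, map_sub, map_mul]; ring
  | succ n ih =>
    rw [Finset.sum_range_succ, mul_add, ih]
    push_cast
    simp only [map_add, map_sub, map_mul, C_1]
    ring

lemma aff' (α β : ℚ) (N s : ℕ) :
    (1 - (X : ℚ[X]))^2 * (X ^ s * ∑ n ∈ Finset.range N, C (α + β * n) * X ^ n) =
      X ^ s * (C α + C (β - α) * X - C (α + β * N) * X ^ N
        + C (α + β * N - β) * X ^ (N+1)) := by
  rw [mul_left_comm, aff]

theorem period_polynomial_identity (m t : ℕ) (hm : 1 ≤ m) (ht1 : 1 ≤ t) (htm : t ≤ m) :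
    (1 - (X : ℚ[X])) ^ 2 * (∑ n ∈ Finset.range (2 * m), C (circTerm m t n) * X ^ n) =
      C ((t : ℚ) - 1) * X ^ (2 * m + 1) - C (t : ℚ) * X ^ (2 * m)
        + 2 * X ^ (2 * m - t + 1) - 2 * X ^ (m - t + 1)
        + C (1 - (t : ℚ)) * X + C (t : ℚ) := by
  obtain ⟨b, rfl⟩ : ∃ b, t = b + 1 := ⟨t - 1, by omega⟩
  obtain ⟨a, rfl⟩ : ∃ a, m = a + (b + 1) := ⟨m - (b+1), by omega⟩
  have h1 : ∑ n ∈ Finset.Ico 0 (a+1), C (circTerm (a+(b+1)) (b+1) n) * X ^ n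
      = ∑ n ∈ Finset.range (a+1), C (((b:ℚ)+1) + 1 * n) * X ^ n := by
    rw [← Finset.range_eq_Ico]
    refine Finset.sum_congr rfl fun n hn => ?_
    simp only [Finset.mem_range] at hn
    simp only [circTerm]; rw [if_pos (by omega)]
    congr 1; push_cast; ring
  have h2 : ∑ n ∈ Finset.Ico (a+1) (2*a+b+2), C (circTerm (a+(b+1)) (b+1) n) * X ^ n
      = X ^ (a+1) * (∑ k ∈ Finset.range (a+b+1), C (((a:ℚ) + b) + (-1) * k) * X ^ k) := by
    rw [Finset.sum_Ico_eq_sum_range,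
      show 2*a+b+2 - (a+1) = a+b+1 from by omega, Finset.mul_sum]
    refine Finset.sum_congr rfl fun k hk => ?_
    simp only [Finset.mem_range] at hk
    simp only [circTerm]; rw [if_neg (by omega), if_pos (by omega)]
    rw [pow_add]
    have : (2 * ((a:ℚ)+(b+1))) - ((b:ℚ)+1) - ((a:ℚ)+1+k) = ((a:ℚ) + b) + (-1) * k := by
      push_cast; ring
    push_cast
    rw [this]; ring
  have h3 : ∑ n ∈ Finset.Ico (2*a+b+2) (2*(a+(b+1))), C (circTerm (a+(b+1)) (b+1) n) * X ^ n
      = X ^ (2*a+b+2) * (∑ k ∈ Finset.range b, C ((1:ℚ) + 1 * k) * X ^ k) := by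
    rw [Finset.sum_Ico_eq_sum_range,
      show 2*(a+(b+1)) - (2*a+b+2) = b from by omega, Finset.mul_sum]
    refine Finset.sum_congr rfl fun k hk => ?_
    simp only [Finset.mem_range] at hk
    simp only [circTerm]; rw [if_neg (by omega), if_neg (by omega)]
    rw [pow_add, show 2*(a+(b+1)) - (b+1) = 2*a+b+1 from by omega]
    have : ((2*a+b+2+k : ℕ) : ℚ) - ((2*a+b+1 : ℕ) : ℚ) = (1:ℚ) + 1 * k := by
      push_cast; ring
    rw [this]; ring
  rw [Finset.range_eq_Ico,
    ← Finset.sum_Ico_consecutive _ (by omega : 0 ≤ a+1) (by omega : a+1 ≤ 2*(a+(b+1))),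
    ← Finset.sum_Ico_consecutive _ (by omega : a+1 ≤ 2*a+b+2)
      (by omega : 2*a+b+2 ≤ 2*(a+(b+1))),
    h1, h2, h3, mul_add, mul_add, aff, aff', aff',
    show 2*(a+(b+1)) + 1 = 2*a+2*b+3 from by omega,
    show 2*(a+(b+1)) = 2*a+2*b+2 from by omega,
    show 2*a+2*b+2 - (b+1) + 1 = 2*a+b+2 from by omega,
    show a+(b+1) - (b+1) + 1 = a+1 from by omega]
  push_cast
  simp only [map_add, map_sub, map_mul, map_neg, map_one, C_1]
  ring
end
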